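/- arXiv:1412.8528 — 3 statements merged into one kernel-verified Lean document; each statement's English description precedes it below -/
import Mathlib

section
/- Let X be a measurable space and H a complex Hilbert space. For every POVM φ on X with values in effects on H, there exists a unique map Φ from the set of measurable functions p : X → [0,1] to the effects on H such that: (i) Φ(1_M) = φ(M) for every measurable M ⊆ X, where 1_M is the indicator function; (ii) Φ(p + q) = Φ(p) + Φ(q) whenever p + q ≤ 1 pointwise; (iii) Φ(r • p) = r • Φ(p) for every r ∈ [0,1]; (iv) whenever (p n) is a pointwise increasing sequence of measurable [0,1]-valued functions converging pointwise to p, Φ(p n) converges to Φ(p) in the weak operator topology. -/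
open Filter Topology
open scoped ComplexInnerProductSpace ComplexOrder

universe u v

noncomputable section

/-- An operator `A` on a complex Hilbert space is positive if `⟪A ψ, ψ⟫` is real and
nonnegative for every vector `ψ` (expressed via the order on `ℂ`). -/
def IsPositiveOp {H : Type*} [NormedAddCommGroup H] [InnerProductSpace ℂ H]
    (A : H →L[ℂ] H) : Prop :=
  ∀ ψ : H, (0 : ℂ) ≤ ⟪A ψ, ψ⟫

/-- An effect is an operator `A` with both `A` and `id - A` positive. -/
def IsEffect {H : Type*} [NormedAddCommGroup H] [InnerProductSpace ℂ H]
    (A : H →L[ℂ] H) : Prop :=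
  IsPositiveOp A ∧ IsPositiveOp (1 - A)

/-- A POVM on a measurable space `X` with values in the effects on `H`. -/
def IsPOVM {X : Type*} [MeasurableSpace X] {H : Type*} [NormedAddCommGroup H]
    [InnerProductSpace ℂ H] (φ : ∀ M : Set X, MeasurableSet M → (H →L[ℂ] H)) : Prop :=
  (∀ (M : Set X) (hM : MeasurableSet M), IsEffect (φ M hM)) ∧
  φ Set.univ MeasurableSet.univ = 1 ∧
  ∀ (M : ℕ → Set X) (hM : ∀ n, MeasurableSet (M n)),
    Pairwise (Function.onFun Disjoint M) →
    ∀ ψ : H, ⟪φ (⋃ n, M n) (MeasurableSet.iUnion hM) ψ, ψ⟫ = ∑' n, ⟪φ (M n) (hM n) ψ, ψ⟫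

/-- Convergence of a sequence of operators in the weak operator topology. -/
def WOTTendsto {H : Type*} [NormedAddCommGroup H] [InnerProductSpace ℂ H]
    (T : ℕ → H →L[ℂ] H) (L : H →L[ℂ] H) : Prop :=
  ∀ ψ χ : H, Tendsto (fun n => ⟪T n ψ, χ⟫) atTop (𝓝 ⟪L ψ, χ⟫)
namespace POVMAux

open MeasureTheory

variable {X : Type u} [MeasurableSpace X] {H : Type v}
  [NormedAddCommGroup H] [InnerProductSpace ℂ H]
variable (φ : ∀ M : Set X, MeasurableSet M → (H →L[ℂ] H))

theorem povm_congr {A B : Set X} (h : A = B) (hA : MeasurableSet A) (hB : MeasurableSet B) :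
    φ A hA = φ B hB := by subst h; rfl

variable (hφ : IsPOVM φ)
include hφ

theorem form_re_nonneg (M : Set X) (hM : MeasurableSet M) (ψ : H) :
    0 ≤ (⟪φ M hM ψ, ψ⟫).re :=
  (Complex.nonneg_iff.mp ((hφ.1 M hM).1 ψ)).1

theorem form_eq_re (M : Set X) (hM : MeasurableSet M) (ψ : H) :
    ⟪φ M hM ψ, ψ⟫ = (((⟪φ M hM ψ, ψ⟫).re : ℝ) : ℂ) := by
  have him := (Complex.nonneg_iff.mp ((hφ.1 M hM).1 ψ)).2
  exact Complex.ext (by simp) (by simp [← him])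

omit hφ in
theorem inner_self_re (ψ : H) : (⟪ψ, ψ⟫ : ℂ).re = ‖ψ‖ ^ 2 := by
  have := inner_self_eq_norm_sq (𝕜 := ℂ) ψ
  simpa using this

theorem form_re_le (M : Set X) (hM : MeasurableSet M) (ψ : H) :
    (⟪φ M hM ψ, ψ⟫).re ≤ ‖ψ‖ ^ 2 := by
  have h1 : (0:ℝ) ≤ (⟪(1 - φ M hM) ψ, ψ⟫).re := (Complex.nonneg_iff.mp ((hφ.1 M hM).2 ψ)).1
  simp only [ContinuousLinearMap.sub_apply, ContinuousLinearMap.one_apply, inner_sub_left,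
    Complex.sub_re] at h1
  have h2 := inner_self_re ψ
  linarith

theorem form_empty (hE : MeasurableSet (∅ : Set X)) (ψ : H) :
    ⟪φ ∅ hE ψ, ψ⟫ = 0 := by
  have h := hφ.2.2 (fun _ => ∅) (fun _ => MeasurableSet.empty)
    (fun i j hij => by simp [Function.onFun]) ψ
  rw [povm_congr φ (show (⋃ _ : ℕ, (∅ : Set X)) = ∅ by simp)
    (MeasurableSet.iUnion fun _ => MeasurableSet.empty) hE] at h
  by_cases hs : Summable fun _ : ℕ => ⟪φ ∅ MeasurableSet.empty ψ, ψ⟫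
  · have h0 := hs.tendsto_atTop_zero
    have : ⟪φ ∅ MeasurableSet.empty ψ, ψ⟫ = 0 := tendsto_nhds_unique tendsto_const_nhds h0
    rw [show (hE : MeasurableSet (∅ : Set X)) = MeasurableSet.empty from rfl]
    exact this
  · rw [tsum_eq_zero_of_not_summable hs] at h
    exact h

theorem form_union {A B : Set X} (hA : MeasurableSet A) (hB : MeasurableSet B)
    (hd : Disjoint A B) (ψ : H) (hAB : MeasurableSet (A ∪ B)) :
    ⟪φ (A ∪ B) hAB ψ, ψ⟫ = ⟪φ A hA ψ, ψ⟫ + ⟪φ B hB ψ, ψ⟫ := by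
  classical
  set f : ℕ → Set X := fun n => if n = 0 then A else if n = 1 then B else ∅ with hf
  have hmeas : ∀ n, MeasurableSet (f n) := by
    intro n; simp only [hf]
    split_ifs <;> first | exact hA | exact hB | exact MeasurableSet.empty
  have hdisj : Pairwise (Function.onFun Disjoint f) := by
    intro i j hij
    simp only [Function.onFun, hf]
    split_ifs <;>
      first
        | exact hd
        | exact hd.symm
        | exact Set.disjoint_empty _
        | exact Set.empty_disjoint _
        | simp_all
  have hU : (⋃ n, f n) = A ∪ B := by
    ext x
    simp only [Set.mem_iUnion, Set.mem_union, hf]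
    constructor
    · rintro ⟨n, hn⟩
      split_ifs at hn with h1 h2
      · exact Or.inl hn
      · exact Or.inr hn
      · simp at hn
    · rintro (h | h)
      · exact ⟨0, by simp [h]⟩
      · exact ⟨1, by simp [h]⟩
  have h := hφ.2.2 f hmeas hdisj ψ
  rw [povm_congr φ hU (MeasurableSet.iUnion hmeas) hAB] at h
  rw [h, tsum_eq_sum (s := Finset.range 2) ?side]
  case side =>
    intro b hb
    have hb0 : b ≠ 0 := by intro h0; exact hb (by simp [h0])
    have hb1 : b ≠ 1 := by intro h1; exact hb (by simp [h1])
    have hfb : f b = ∅ := by simp [hf, hb0, hb1]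
    rw [povm_congr φ hfb (hmeas b) MeasurableSet.empty]
    exact form_empty φ hφ MeasurableSet.empty ψ
  have e0 : φ (f 0) (hmeas 0) = φ A hA := povm_congr φ (by simp [hf]) _ _
  have e1 : φ (f 1) (hmeas 1) = φ B hB := povm_congr φ (by simp [hf]) _ _
  rw [Finset.sum_range_succ, Finset.sum_range_one, e0, e1]

theorem form_biUnion (M : ℕ → Set X) (hM : ∀ k, MeasurableSet (M k))
    (hd : Pairwise (Function.onFun Disjoint M)) (ψ : H) (F : Finset ℕ)
    (hU : MeasurableSet (⋃ k ∈ F, M k)) :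
    ⟪φ (⋃ k ∈ F, M k) hU ψ, ψ⟫ = ∑ k ∈ F, ⟪φ (M k) (hM k) ψ, ψ⟫ := by
  classical
  induction F using Finset.induction_on with
  | empty =>
    rw [povm_congr φ (by simp) hU MeasurableSet.empty, form_empty φ hφ MeasurableSet.empty ψ,
      Finset.sum_empty]
  | @insert a F ha IH =>
    have e : (⋃ k ∈ insert a F, M k) = M a ∪ ⋃ k ∈ F, M k := by
      simp [Set.biUnion_insert]
    have hub : MeasurableSet (⋃ k ∈ F, M k) :=
      MeasurableSet.biUnion F.countable_toSet fun k _ => hM k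
    have hdis : Disjoint (M a) (⋃ k ∈ F, M k) := by
      rw [Set.disjoint_left]
      intro x hx hx2
      simp only [Set.mem_iUnion] at hx2
      obtain ⟨k, hkF, hxk⟩ := hx2
      have hak : a ≠ k := fun hak => ha (hak ▸ hkF)
      exact Set.disjoint_left.mp (hd hak) hx hxk
    rw [povm_congr φ e hU ((hM a).union hub),
      form_union φ hφ (hM a) hub hdis ψ _, IH hub, Finset.sum_insert ha]

theorem summable_form (M : ℕ → Set X) (hM : ∀ k, MeasurableSet (M k))
    (hd : Pairwise (Function.onFun Disjoint M)) (ψ : H) :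
    Summable fun n => (⟪φ (M n) (hM n) ψ, ψ⟫).re := by
  apply summable_of_sum_range_le (c := ‖ψ‖ ^ 2) (fun n => form_re_nonneg φ hφ _ _ ψ)
  intro n
  have hU : MeasurableSet (⋃ k ∈ Finset.range n, M k) :=
    MeasurableSet.biUnion (Finset.range n).countable_toSet fun k _ => hM k
  have h := form_biUnion φ hφ M hM hd ψ (Finset.range n) hU
  calc ∑ k ∈ Finset.range n, (⟪φ (M k) (hM k) ψ, ψ⟫).re
      = (∑ k ∈ Finset.range n, ⟪φ (M k) (hM k) ψ, ψ⟫).re := (Complex.re_sum _ _).symm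
    _ = (⟪φ (⋃ k ∈ Finset.range n, M k) hU ψ, ψ⟫).re := by rw [h]
    _ ≤ ‖ψ‖ ^ 2 := form_re_le φ hφ _ _ ψ

/-- The finite positive measure `M ↦ ⟪φ(M) ψ, ψ⟫` associated to a POVM and a vector. -/
def povmMeasure (hφ : IsPOVM φ) (ψ : H) : Measure X :=
  Measure.ofMeasurable (fun M hM => ENNReal.ofReal ((⟪φ M hM ψ, ψ⟫).re))
    (by rw [form_empty φ hφ MeasurableSet.empty ψ]; simp)
    (by
      intro f h hd
      have hsum := summable_form φ hφ f h hd ψ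
      have hc : ⟪φ (⋃ i, f i) (MeasurableSet.iUnion h) ψ, ψ⟫
          = ∑' n, ⟪φ (f n) (h n) ψ, ψ⟫ := hφ.2.2 f h hd ψ
      have h2 : ∑' n, ⟪φ (f n) (h n) ψ, ψ⟫
          = (((∑' n, (⟪φ (f n) (h n) ψ, ψ⟫).re : ℝ)) : ℂ) := by
        have hm := (hsum.hasSum.mapL Complex.ofRealCLM).tsum_eq
        simp only [Complex.ofRealCLM_apply] at hm
        rw [← hm]
        exact tsum_congr fun n => form_eq_re φ hφ _ _ ψ
      have h3 : (⟪φ (⋃ i, f i) (MeasurableSet.iUnion h) ψ, ψ⟫).re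
          = ∑' n, (⟪φ (f n) (h n) ψ, ψ⟫).re := by
        rw [hc, h2, Complex.ofReal_re]
      rw [h3, ENNReal.ofReal_tsum_of_nonneg (fun n => form_re_nonneg φ hφ _ _ ψ) hsum])

theorem povmMeasure_apply (ψ : H) (M : Set X) (hM : MeasurableSet M) :
    povmMeasure φ hφ ψ M = ENNReal.ofReal ((⟪φ M hM ψ, ψ⟫).re) :=
  Measure.ofMeasurable_apply M hM

theorem povmMeasure_finite (ψ : H) : IsFiniteMeasure (povmMeasure φ hφ ψ) :=
  ⟨by rw [povmMeasure_apply φ hφ ψ Set.univ MeasurableSet.univ]; exact ENNReal.ofReal_lt_top⟩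

theorem integrable_Icc (f : X → ℝ) (hf1 : Measurable f)
    (hf2 : ∀ x, f x ∈ Set.Icc (0 : ℝ) 1) (ψ : H) :
    Integrable f (povmMeasure φ hφ ψ) := by
  haveI := povmMeasure_finite φ hφ ψ
  exact (integrable_const (1 : ℝ)).mono' hf1.aestronglyMeasurable
    (ae_of_all _ fun x => by
      rw [Real.norm_eq_abs, abs_of_nonneg (hf2 x).1]; exact (hf2 x).2)

/-- The quadratic form `ψ ↦ ∫ p dμ_ψ`. -/
def Qf (hφ : IsPOVM φ) (p : X → ℝ) (ψ : H) : ℝ :=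
  ∫ x, p x ∂(povmMeasure φ hφ ψ)

theorem Qf_nonneg (p : X → ℝ) (hp2 : ∀ x, p x ∈ Set.Icc (0 : ℝ) 1) (ψ : H) :
    0 ≤ Qf φ hφ p ψ :=
  integral_nonneg fun x => (hp2 x).1

theorem Qf_le (p : X → ℝ) (hp1 : Measurable p) (hp2 : ∀ x, p x ∈ Set.Icc (0 : ℝ) 1) (ψ : H) :
    Qf φ hφ p ψ ≤ ‖ψ‖ ^ 2 := by
  haveI := povmMeasure_finite φ hφ ψ
  have h1 : Qf φ hφ p ψ ≤ ∫ _, (1 : ℝ) ∂(povmMeasure φ hφ ψ) :=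
    integral_mono (integrable_Icc φ hφ p hp1 hp2 ψ) (integrable_const 1) fun x => (hp2 x).2
  rw [integral_const, smul_eq_mul, mul_one, measureReal_def,
    povmMeasure_apply φ hφ ψ Set.univ MeasurableSet.univ] at h1
  rw [hφ.2.1] at h1
  simp only [ContinuousLinearMap.one_apply] at h1
  rw [inner_self_re, ENNReal.toReal_ofReal (sq_nonneg _)] at h1
  exact h1

theorem Qf_indicator (M : Set X) (hM : MeasurableSet M) (ψ : H) :
    Qf φ hφ (M.indicator fun _ => (1 : ℝ)) ψ = (⟪φ M hM ψ, ψ⟫).re := by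
  rw [Qf, integral_indicator_const (1 : ℝ) hM, smul_eq_mul, mul_one, measureReal_def,
    povmMeasure_apply φ hφ ψ M hM, ENNReal.toReal_ofReal (form_re_nonneg φ hφ M hM ψ)]

theorem Qf_add (p q : X → ℝ) (hp : Integrable p (povmMeasure φ hφ ψ))
    (hq : Integrable q (povmMeasure φ hφ ψ)) :
    Qf φ hφ (p + q) ψ = Qf φ hφ p ψ + Qf φ hφ q ψ := by
  simp only [Qf, Pi.add_apply]
  exact integral_add hp hq

theorem Qf_smul (r : ℝ) (p : X → ℝ) (ψ : H) :
    Qf φ hφ (r • p) ψ = r * Qf φ hφ p ψ := by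
  simp only [Qf, Pi.smul_apply, smul_eq_mul]
  exact integral_const_mul r p

/-- Dyadic approximation from below. -/
def sApprox (p : X → ℝ) (n : ℕ) (x : X) : ℝ :=
  (⌊p x * 2 ^ n⌋ : ℝ) / 2 ^ n

omit hφ in
theorem floor_nn {a : ℝ} (ha : a ∈ Set.Icc (0:ℝ) 1) (n : ℕ) : 0 ≤ ⌊a * 2 ^ n⌋ :=
  Int.floor_nonneg.mpr (by nlinarith [ha.1, pow_pos (by norm_num : (0:ℝ) < 2) n])

omit hφ in
theorem floor_le_pow {a : ℝ} (ha : a ∈ Set.Icc (0:ℝ) 1) (n : ℕ) : ⌊a * 2 ^ n⌋ ≤ 2 ^ n := by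
  have h2 : (0:ℝ) < 2 ^ n := by positivity
  have h : a * 2 ^ n ≤ ((2 ^ n : ℤ) : ℝ) := by
    push_cast
    nlinarith [ha.2]
  calc ⌊a * 2 ^ n⌋ ≤ ⌊((2 ^ n : ℤ) : ℝ)⌋ := Int.floor_le_floor h
    _ = 2 ^ n := Int.floor_intCast _

omit hφ in
theorem sApprox_mem {p : X → ℝ} {x : X} (ha : p x ∈ Set.Icc (0:ℝ) 1) (n : ℕ) :
    sApprox p n x ∈ Set.Icc (0:ℝ) 1 := by
  have h2 : (0:ℝ) < 2 ^ n := by positivity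
  simp only [sApprox]
  constructor
  · apply div_nonneg _ h2.le
    exact_mod_cast floor_nn ha n
  · rw [div_le_one h2]
    have := floor_le_pow ha n
    exact_mod_cast this

omit hφ in
theorem sApprox_monotone {p : X → ℝ} {x : X} (ha : p x ∈ Set.Icc (0:ℝ) 1) :
    Monotone fun n => sApprox p n x := by
  apply monotone_nat_of_le_succ
  intro n
  have h2 : (0:ℝ) < 2 ^ n := by positivity
  have h3 : (0:ℝ) < 2 ^ (n+1) := by positivity
  have h1 : (2:ℤ) * ⌊p x * 2 ^ n⌋ ≤ ⌊p x * 2 ^ (n+1)⌋ := by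
    rw [Int.le_floor]
    push_cast
    have hfl := Int.floor_le (p x * 2 ^ n)
    have e : (2:ℝ) ^ (n+1) = 2 ^ n * 2 := pow_succ 2 n
    rw [e, ← mul_assoc]
    linarith
  simp only [sApprox]
  rw [div_le_div_iff₀ h2 h3]
  have h1' : (2:ℝ) * (⌊p x * 2 ^ n⌋ : ℝ) ≤ (⌊p x * 2 ^ (n+1)⌋ : ℝ) := by exact_mod_cast h1
  have e2 : (⌊p x * 2 ^ n⌋ : ℝ) * 2 ^ (n+1) = (2 * (⌊p x * 2 ^ n⌋ : ℝ)) * 2 ^ n := by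
    rw [pow_succ]; ring
  rw [e2]
  exact mul_le_mul_of_nonneg_right h1' h2.le

omit hφ in
theorem sApprox_tendsto {p : X → ℝ} {x : X} (ha : p x ∈ Set.Icc (0:ℝ) 1) :
    Tendsto (fun n => sApprox p n x) atTop (𝓝 (p x)) := by
  rw [← tendsto_sub_nhds_zero_iff]
  have key : ∀ n, ‖sApprox p n x - p x‖ ≤ (1/2 : ℝ) ^ n := by
    intro n
    have h2 : (0:ℝ) < 2 ^ n := by positivity
    rw [Real.norm_eq_abs, abs_le]
    have hle : sApprox p n x ≤ p x := by
      rw [sApprox, div_le_iff₀ h2]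
      exact Int.floor_le _
    have hgt : p x - (1/2) ^ n < sApprox p n x := by
      rw [sApprox, lt_div_iff₀ h2, sub_mul]
      have h4 : (1/2:ℝ) ^ n * 2 ^ n = 1 := by
        rw [← mul_pow]; norm_num
      have := Int.lt_floor_add_one (p x * 2 ^ n)
      nlinarith
    constructor <;> linarith
  exact squeeze_zero_norm key
    (tendsto_pow_atTop_nhds_zero_of_lt_one (by norm_num) (by norm_num))

omit hφ in
theorem sApprox_measurable {p : X → ℝ} (hp1 : Measurable p) (n : ℕ) :
    Measurable (sApprox p n) := by
  have h1 : Measurable fun x => ⌊p x * 2 ^ n⌋ := (hp1.mul_const _).floor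
  exact (Measurable.of_discrete.comp h1).div_const _

/-- Level sets of the dyadic approximation. -/
def lev (p : X → ℝ) (n k : ℕ) : Set X := {x | ⌊p x * 2 ^ n⌋ = (k : ℤ)}

omit hφ in
theorem lev_meas {p : X → ℝ} (hp1 : Measurable p) (n k : ℕ) :
    MeasurableSet (lev p n k) :=
  (hp1.mul_const _).floor (measurableSet_singleton ((k : ℤ)))

omit hφ in
theorem lev_disjoint (p : X → ℝ) (n : ℕ) :
    Pairwise (Function.onFun Disjoint (lev p n)) := by
  intro i j hij
  rw [Function.onFun, Set.disjoint_left]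
  intro x hx1 hx2
  apply hij
  have h1 : ((i : ℤ)) = (j : ℤ) := by
    rw [← hx1, ← hx2]
  exact_mod_cast h1

omit hφ in
theorem lev_sum {p : X → ℝ} (hp2 : ∀ x, p x ∈ Set.Icc (0:ℝ) 1) (n : ℕ) (x : X) :
    ∑ k ∈ Finset.range (2 ^ n + 1),
      ((k : ℝ) / 2 ^ n) * (lev p n k).indicator (fun _ => (1:ℝ)) x = sApprox p n x := by
  have hj0 : 0 ≤ ⌊p x * 2 ^ n⌋ := floor_nn (hp2 x) n
  have hj1 : ⌊p x * 2 ^ n⌋ ≤ 2 ^ n := floor_le_pow (hp2 x) n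
  have hmem : ⌊p x * 2 ^ n⌋.toNat ∈ Finset.range (2 ^ n + 1) := by
    rw [Finset.mem_range]
    have h : (⌊p x * 2 ^ n⌋.toNat : ℤ) ≤ ((2 ^ n : ℕ) : ℤ) := by
      rw [Int.toNat_of_nonneg hj0]; exact_mod_cast hj1
    omega
  rw [Finset.sum_eq_single_of_mem _ hmem]
  · have hx : x ∈ lev p n ⌊p x * 2 ^ n⌋.toNat := by
      simp only [lev, Set.mem_setOf_eq, Int.toNat_of_nonneg hj0]
    rw [Set.indicator_of_mem hx, mul_one, sApprox]
    congr 1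
    rw [← Int.cast_natCast, Int.toNat_of_nonneg hj0]
  · intro k hk hne
    have hx : x ∉ lev p n k := by
      simp only [lev, Set.mem_setOf_eq]
      intro h
      apply hne
      omega
    rw [Set.indicator_of_notMem hx, mul_zero]

/-- The operator attached to a simple combination of indicators. -/
def scop (c : ℕ → ℝ) (M : ℕ → Set X) (hM : ∀ k, MeasurableSet (M k)) (F : Finset ℕ) :
    H →L[ℂ] H :=
  ∑ k ∈ F, ((c k : ℝ) : ℂ) • φ (M k) (hM k)

theorem scop_inner_self (c : ℕ → ℝ) (M : ℕ → Set X) (hM : ∀ k, MeasurableSet (M k))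
    (F : Finset ℕ) (ψ : H) :
    ⟪scop φ c M hM F ψ, ψ⟫
      = (((∑ k ∈ F, c k * (⟪φ (M k) (hM k) ψ, ψ⟫).re : ℝ)) : ℂ) := by
  calc ⟪scop φ c M hM F ψ, ψ⟫ = ∑ k ∈ F, ((c k : ℝ) : ℂ) * ⟪φ (M k) (hM k) ψ, ψ⟫ := by
        rw [scop, ContinuousLinearMap.sum_apply, sum_inner]
        refine Finset.sum_congr rfl fun k _ => ?_
        rw [ContinuousLinearMap.smul_apply, inner_smul_left, Complex.conj_ofReal]
    _ = ∑ k ∈ F, (((c k * (⟪φ (M k) (hM k) ψ, ψ⟫).re : ℝ)) : ℂ) :=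
        Finset.sum_congr rfl fun k _ => by
          rw [form_eq_re φ hφ (M k) (hM k) ψ, Complex.ofReal_re]; push_cast; ring
    _ = _ := by rw [Complex.ofReal_sum]

theorem integral_sum_indicator (c : ℕ → ℝ) (M : ℕ → Set X) (hM : ∀ k, MeasurableSet (M k))
    (F : Finset ℕ) (ψ : H) :
    ∫ x, (∑ k ∈ F, c k * (M k).indicator (fun _ => (1:ℝ)) x) ∂(povmMeasure φ hφ ψ)
      = ∑ k ∈ F, c k * (⟪φ (M k) (hM k) ψ, ψ⟫).re := by
  haveI := povmMeasure_finite φ hφ ψ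
  rw [integral_finset_sum F
    (fun k _ => (((integrable_const (1:ℝ)).indicator (hM k)).const_mul (c k)))]
  refine Finset.sum_congr rfl fun k _ => ?_
  rw [integral_const_mul, integral_indicator_const (1:ℝ) (hM k), smul_eq_mul, mul_one,
    measureReal_def,
    povmMeasure_apply φ hφ ψ (M k) (hM k),
    ENNReal.toReal_ofReal (form_re_nonneg φ hφ (M k) (hM k) ψ)]

/-- The canonical simple operator approximating the integral of `p`. -/
def Tn (p : X → ℝ) (hp1 : Measurable p) (n : ℕ) : H →L[ℂ] H :=
  scop φ (fun k => (k : ℝ) / 2 ^ n) (lev p n) (fun k => lev_meas hp1 n k)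
    (Finset.range (2 ^ n + 1))

theorem Tn_inner_self (p : X → ℝ) (hp1 : Measurable p)
    (hp2 : ∀ x, p x ∈ Set.Icc (0:ℝ) 1) (n : ℕ) (ψ : H) :
    ⟪Tn φ p hp1 n ψ, ψ⟫ = ((∫ x, sApprox p n x ∂(povmMeasure φ hφ ψ) : ℝ) : ℂ) := by
  rw [Tn, scop_inner_self φ hφ]
  congr 1
  rw [← integral_sum_indicator φ hφ (fun k => (k : ℝ) / 2 ^ n) (lev p n)
    (fun k => lev_meas hp1 n k) (Finset.range (2 ^ n + 1)) ψ]
  exact integral_congr_ae (ae_of_all _ fun x => lev_sum hp2 n x)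

theorem Tn_self_tendsto (p : X → ℝ) (hp1 : Measurable p)
    (hp2 : ∀ x, p x ∈ Set.Icc (0:ℝ) 1) (ψ : H) :
    Tendsto (fun n => ⟪Tn φ p hp1 n ψ, ψ⟫) atTop (𝓝 ((Qf φ hφ p ψ : ℝ) : ℂ)) := by
  have h1 : Tendsto (fun n => ∫ x, sApprox p n x ∂(povmMeasure φ hφ ψ)) atTop
      (𝓝 (Qf φ hφ p ψ)) := by
    apply integral_tendsto_of_tendsto_of_monotone
    · exact fun n => integrable_Icc φ hφ _ (sApprox_measurable hp1 n)
        (fun x => sApprox_mem (hp2 x) n) ψ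
    · exact integrable_Icc φ hφ p hp1 hp2 ψ
    · exact ae_of_all _ fun x => sApprox_monotone (hp2 x)
    · exact ae_of_all _ fun x => sApprox_tendsto (hp2 x)
  have h2 : (fun n => ⟪Tn φ p hp1 n ψ, ψ⟫)
      = fun n => ((∫ x, sApprox p n x ∂(povmMeasure φ hφ ψ) : ℝ) : ℂ) :=
    funext fun n => Tn_inner_self φ hφ p hp1 hp2 n ψ
  rw [h2]
  exact (Complex.continuous_ofReal.tendsto _).comp h1

/-- The sesquilinear form obtained by polarization of the quadratic form `Qf`. -/
def Bform (hφ : IsPOVM φ) (p : X → ℝ) (ψ χ : H) : ℂ :=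
  (((Qf φ hφ p (χ + ψ) : ℝ) : ℂ) - ((Qf φ hφ p (χ - ψ) : ℝ) : ℂ) +
      Complex.I * ((Qf φ hφ p (χ + Complex.I • ψ) : ℝ) : ℂ) -
      Complex.I * ((Qf φ hφ p (χ - Complex.I • ψ) : ℝ) : ℂ)) / 4

theorem Tn_tendsto (p : X → ℝ) (hp1 : Measurable p)
    (hp2 : ∀ x, p x ∈ Set.Icc (0:ℝ) 1) (ψ χ : H) :
    Tendsto (fun n => ⟪Tn φ p hp1 n ψ, χ⟫) atTop (𝓝 (Bform φ hφ p ψ χ)) := by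
  have hrw : (fun n => ⟪Tn φ p hp1 n ψ, χ⟫)
      = fun n => (⟪Tn φ p hp1 n (χ + ψ), χ + ψ⟫ - ⟪Tn φ p hp1 n (χ - ψ), χ - ψ⟫ +
          Complex.I * ⟪Tn φ p hp1 n (χ + Complex.I • ψ), χ + Complex.I • ψ⟫ -
          Complex.I * ⟪Tn φ p hp1 n (χ - Complex.I • ψ), χ - Complex.I • ψ⟫) / 4 := by
    funext n
    exact inner_map_polarization (Tn φ p hp1 n : H →ₗ[ℂ] H) χ ψ
  rw [hrw, Bform]
  exact ((((Tn_self_tendsto φ hφ p hp1 hp2 (χ + ψ)).sub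
      (Tn_self_tendsto φ hφ p hp1 hp2 (χ - ψ))).add
      (tendsto_const_nhds.mul (Tn_self_tendsto φ hφ p hp1 hp2 (χ + Complex.I • ψ)))).sub
      (tendsto_const_nhds.mul (Tn_self_tendsto φ hφ p hp1 hp2 (χ - Complex.I • ψ)))).div_const 4

section BformProps

variable (p : X → ℝ) (hp1 : Measurable p) (hp2 : ∀ x, p x ∈ Set.Icc (0:ℝ) 1)
include hp1 hp2

theorem Bform_add_left (ψ₁ ψ₂ χ : H) :
    Bform φ hφ p (ψ₁ + ψ₂) χ = Bform φ hφ p ψ₁ χ + Bform φ hφ p ψ₂ χ := by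
  refine tendsto_nhds_unique (Tn_tendsto φ hφ p hp1 hp2 (ψ₁ + ψ₂) χ) ?_
  have h := (Tn_tendsto φ hφ p hp1 hp2 ψ₁ χ).add (Tn_tendsto φ hφ p hp1 hp2 ψ₂ χ)
  simpa only [map_add, inner_add_left] using h

theorem Bform_smul_left (a : ℂ) (ψ χ : H) :
    Bform φ hφ p (a • ψ) χ = (starRingEnd ℂ) a * Bform φ hφ p ψ χ := by
  refine tendsto_nhds_unique (Tn_tendsto φ hφ p hp1 hp2 (a • ψ) χ) ?_
  have h := (Tn_tendsto φ hφ p hp1 hp2 ψ χ).const_mul ((starRingEnd ℂ) a)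
  simpa only [_root_.map_smul, inner_smul_left] using h

theorem Bform_add_right (ψ χ₁ χ₂ : H) :
    Bform φ hφ p ψ (χ₁ + χ₂) = Bform φ hφ p ψ χ₁ + Bform φ hφ p ψ χ₂ := by
  refine tendsto_nhds_unique (Tn_tendsto φ hφ p hp1 hp2 ψ (χ₁ + χ₂)) ?_
  have h := (Tn_tendsto φ hφ p hp1 hp2 ψ χ₁).add (Tn_tendsto φ hφ p hp1 hp2 ψ χ₂)
  simpa only [inner_add_right] using h

theorem Bform_smul_right (a : ℂ) (ψ χ : H) :
    Bform φ hφ p ψ (a • χ) = a * Bform φ hφ p ψ χ := by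
  refine tendsto_nhds_unique (Tn_tendsto φ hφ p hp1 hp2 ψ (a • χ)) ?_
  have h := (Tn_tendsto φ hφ p hp1 hp2 ψ χ).const_mul a
  simpa only [inner_smul_right] using h

theorem Bform_bound_crude (ψ χ : H) :
    ‖Bform φ hφ p ψ χ‖ ≤ (‖ψ‖ + ‖χ‖) ^ 2 := by
  have hQ : ∀ w : H, ‖((Qf φ hφ p w : ℝ) : ℂ)‖ ≤ ‖w‖ ^ 2 := fun w => by
    rw [Complex.norm_real, Real.norm_eq_abs, abs_of_nonneg (Qf_nonneg φ hφ p hp2 w)]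
    exact Qf_le φ hφ p hp1 hp2 w
  have hb : ∀ w : H, ‖w‖ ≤ ‖ψ‖ + ‖χ‖ → ‖((Qf φ hφ p w : ℝ) : ℂ)‖ ≤ (‖ψ‖ + ‖χ‖) ^ 2 :=
    fun w hw => (hQ w).trans (by nlinarith [norm_nonneg w, norm_nonneg ψ, norm_nonneg χ])
  have hIψ : ‖Complex.I • ψ‖ = ‖ψ‖ := by
    rw [norm_smul, Complex.norm_I, one_mul]
  have h1 := hb (χ + ψ) ((norm_add_le χ ψ).trans (by linarith))
  have h2 := hb (χ - ψ) ((norm_sub_le χ ψ).trans (by linarith))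
  have h3 := hb (χ + Complex.I • ψ) ((norm_add_le χ _).trans (by rw [hIψ]; linarith))
  have h4 := hb (χ - Complex.I • ψ) ((norm_sub_le χ _).trans (by rw [hIψ]; linarith))
  rw [Bform]
  rw [norm_div]
  have hI : ‖(Complex.I * ((Qf φ hφ p (χ + Complex.I • ψ) : ℝ) : ℂ))‖
      = ‖((Qf φ hφ p (χ + Complex.I • ψ) : ℝ) : ℂ)‖ := by
    rw [norm_mul, Complex.norm_I, one_mul]
  have hI' : ‖(Complex.I * ((Qf φ hφ p (χ - Complex.I • ψ) : ℝ) : ℂ))‖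
      = ‖((Qf φ hφ p (χ - Complex.I • ψ) : ℝ) : ℂ)‖ := by
    rw [norm_mul, Complex.norm_I, one_mul]
  have hnum : ‖((Qf φ hφ p (χ + ψ) : ℝ) : ℂ) - ((Qf φ hφ p (χ - ψ) : ℝ) : ℂ) +
      Complex.I * ((Qf φ hφ p (χ + Complex.I • ψ) : ℝ) : ℂ) -
      Complex.I * ((Qf φ hφ p (χ - Complex.I • ψ) : ℝ) : ℂ)‖ ≤ 4 * (‖ψ‖ + ‖χ‖) ^ 2 := by
    calc ‖_ - _ + _ - _‖ ≤ ‖_ - _ + _‖ + ‖_‖ := norm_sub_le _ _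
      _ ≤ (‖_ - _‖ + ‖_‖) + ‖_‖ := by gcongr; exact norm_add_le _ _
      _ ≤ ((‖_‖ + ‖_‖) + ‖_‖) + ‖_‖ := by gcongr; exact norm_sub_le _ _
      _ ≤ 4 * (‖ψ‖ + ‖χ‖) ^ 2 := by rw [hI, hI']; linarith
  have h4' : ‖(4 : ℂ)‖ = 4 := by norm_num
  rw [h4']
  linarith [hnum]

theorem Bform_bound (ψ χ : H) :
    ‖Bform φ hφ p ψ χ‖ ≤ 4 * ‖ψ‖ * ‖χ‖ := by
  rcases eq_or_ne ψ 0 with hψ | hψ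
  · subst hψ
    have h := Bform_smul_left φ hφ p hp1 hp2 0 0 χ
    rw [smul_zero] at h
    simp only [map_zero, zero_mul] at h
    rw [h]
    simp
  rcases eq_or_ne χ 0 with hχ | hχ
  · subst hχ
    have h := Bform_smul_right φ hφ p hp1 hp2 0 ψ 0
    rw [smul_zero] at h
    rw [h]
    simp
  · have ha : (0:ℝ) < ‖ψ‖ := norm_pos_iff.mpr hψ
    have hb : (0:ℝ) < ‖χ‖ := norm_pos_iff.mpr hχ
    set t : ℝ := Real.sqrt (‖χ‖ / ‖ψ‖) with hts
    have ht : 0 < t := Real.sqrt_pos.mpr (div_pos hb ha)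
    have ht2 : t ^ 2 = ‖χ‖ / ‖ψ‖ := Real.sq_sqrt (div_pos hb ha).le
    have hkey : Bform φ hφ p ψ χ = Bform φ hφ p ((t:ℂ) • ψ) (((t⁻¹ : ℝ):ℂ) • χ) := by
      rw [Bform_smul_left φ hφ p hp1 hp2, Bform_smul_right φ hφ p hp1 hp2,
        Complex.conj_ofReal]
      rw [← mul_assoc, ← Complex.ofReal_mul]
      rw [mul_inv_cancel₀ ht.ne']
      simp
    rw [hkey]
    have hcrude := Bform_bound_crude φ hφ p hp1 hp2 ((t:ℂ) • ψ) (((t⁻¹ : ℝ):ℂ) • χ)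
    have e1 : ‖(t:ℂ) • ψ‖ = t * ‖ψ‖ := by
      rw [norm_smul, Complex.norm_real, Real.norm_eq_abs, abs_of_pos ht]
    have e2 : ‖((t⁻¹ : ℝ):ℂ) • χ‖ = t⁻¹ * ‖χ‖ := by
      rw [norm_smul, Complex.norm_real, Real.norm_eq_abs, abs_of_pos (inv_pos.mpr ht)]
    rw [e1, e2] at hcrude
    have e3 : (t * ‖ψ‖ + t⁻¹ * ‖χ‖) ^ 2 = 4 * ‖ψ‖ * ‖χ‖ := by
      have h1 : t ^ 2 * ‖ψ‖ = ‖χ‖ := by rw [ht2]; field_simp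
      have h2 : t⁻¹ ^ 2 * ‖χ‖ = ‖ψ‖ := by
        rw [inv_pow, ht2]; field_simp
      have expand : (t * ‖ψ‖ + t⁻¹ * ‖χ‖) ^ 2
          = t ^ 2 * ‖ψ‖ * ‖ψ‖ + 2 * (t * t⁻¹) * (‖ψ‖ * ‖χ‖) + t⁻¹ ^ 2 * ‖χ‖ * ‖χ‖ := by
        ring
      rw [expand, h1, h2, mul_inv_cancel₀ ht.ne']
      ring
    rw [e3] at hcrude
    calc ‖Bform φ hφ p ((t:ℂ) • ψ) (((t⁻¹ : ℝ):ℂ) • χ)‖ ≤ 4 * ‖ψ‖ * ‖χ‖ := hcrude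
      _ ≤ 4 * ‖ψ‖ * ‖χ‖ := le_rfl

end BformProps

omit hφ in
theorem clm_ext_inner_self {S T : H →L[ℂ] H} (h : ∀ ψ : H, ⟪S ψ, ψ⟫ = ⟪T ψ, ψ⟫) : S = T := by
  have h2 : ((S : H →ₗ[ℂ] H) - (T : H →ₗ[ℂ] H)) = 0 :=
    (inner_map_self_eq_zero _).mp fun x => by
      simp only [LinearMap.sub_apply, ContinuousLinearMap.coe_coe, inner_sub_left]
      rw [h x, sub_self]
  ext x
  have h3 := LinearMap.congr_fun h2 x
  simp only [LinearMap.sub_apply, ContinuousLinearMap.coe_coe, LinearMap.zero_apply,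
    sub_eq_zero] at h3
  exact h3

omit hφ in
theorem wot_of_inner_self {T : ℕ → H →L[ℂ] H} {L : H →L[ℂ] H}
    (h : ∀ w : H, Tendsto (fun n => ⟪T n w, w⟫) atTop (𝓝 ⟪L w, w⟫)) : WOTTendsto T L := by
  intro ψ χ
  have hrw : ∀ S : H →L[ℂ] H, ⟪S ψ, χ⟫
      = (⟪S (χ + ψ), χ + ψ⟫ - ⟪S (χ - ψ), χ - ψ⟫ +
          Complex.I * ⟪S (χ + Complex.I • ψ), χ + Complex.I • ψ⟫ -
          Complex.I * ⟪S (χ - Complex.I • ψ), χ - Complex.I • ψ⟫) / 4 := fun S =>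
    inner_map_polarization (S : H →ₗ[ℂ] H) χ ψ
  simp only [hrw]
  exact ((((h (χ + ψ)).sub (h (χ - ψ))).add
      (tendsto_const_nhds.mul (h (χ + Complex.I • ψ)))).sub
      (tendsto_const_nhds.mul (h (χ - Complex.I • ψ)))).div_const 4

section Operator

variable [CompleteSpace H]
variable (p : X → ℝ) (hp1 : Measurable p) (hp2 : ∀ x, p x ∈ Set.Icc (0:ℝ) 1)

/-- The bounded sesquilinear form attached to `p`. -/
def BL : H →L⋆[ℂ] H →L[ℂ] ℂ :=
  LinearMap.mkContinuous₂
    (LinearMap.mk₂'ₛₗ (starRingEnd ℂ) (RingHom.id ℂ) (Bform φ hφ p)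
      (fun ψ₁ ψ₂ χ => Bform_add_left φ hφ p hp1 hp2 ψ₁ ψ₂ χ)
      (fun a ψ χ => by rw [Bform_smul_left φ hφ p hp1 hp2 a ψ χ]; rfl)
      (fun ψ χ₁ χ₂ => Bform_add_right φ hφ p hp1 hp2 ψ χ₁ χ₂)
      (fun a ψ χ => by rw [Bform_smul_right φ hφ p hp1 hp2 a ψ χ]; rfl))
    4 (fun ψ χ => Bform_bound φ hφ p hp1 hp2 ψ χ)

/-- The operator `∫ p dφ` obtained from the bounded sesquilinear form by Riesz
representation. -/
def Aop : H →L[ℂ] H :=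
  InnerProductSpace.continuousLinearMapOfBilin (BL φ hφ p hp1 hp2)

theorem Aop_inner (ψ χ : H) : ⟪Aop φ hφ p hp1 hp2 ψ, χ⟫ = Bform φ hφ p ψ χ :=
  InnerProductSpace.continuousLinearMapOfBilin_apply (BL φ hφ p hp1 hp2) ψ χ

theorem Aop_inner_self (ψ : H) :
    ⟪Aop φ hφ p hp1 hp2 ψ, ψ⟫ = ((Qf φ hφ p ψ : ℝ) : ℂ) := by
  rw [Aop_inner φ hφ p hp1 hp2 ψ ψ]
  exact tendsto_nhds_unique (Tn_tendsto φ hφ p hp1 hp2 ψ ψ)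
    (Tn_self_tendsto φ hφ p hp1 hp2 ψ)

theorem Aop_isEffect : IsEffect (Aop φ hφ p hp1 hp2) := by
  constructor
  · intro ψ
    rw [Aop_inner_self φ hφ p hp1 hp2 ψ]
    exact Complex.zero_le_real.mpr (Qf_nonneg φ hφ p hp2 ψ)
  · intro ψ
    simp only [ContinuousLinearMap.sub_apply, ContinuousLinearMap.one_apply, inner_sub_left]
    rw [Aop_inner_self φ hφ p hp1 hp2 ψ]
    refine Complex.nonneg_iff.mpr ⟨?_, ?_⟩
    · rw [Complex.sub_re, Complex.ofReal_re, inner_self_re]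
      linarith [Qf_le φ hφ p hp1 hp2 ψ]
    · have him : (⟪ψ, ψ⟫ : ℂ).im = 0 := inner_self_im (𝕜 := ℂ) ψ
      rw [Complex.sub_im, Complex.ofReal_im, him]
      ring

end Operator

omit hφ in
theorem ind_meas {M : Set X} (hM : MeasurableSet M) :
    Measurable (M.indicator fun _ => (1:ℝ)) :=
  measurable_const.indicator hM

omit hφ in
theorem ind_mem (M : Set X) : ∀ x, (M.indicator fun _ => (1:ℝ)) x ∈ Set.Icc (0:ℝ) 1 := by
  intro x
  by_cases hx : x ∈ M
  · rw [Set.indicator_of_mem hx]; constructor <;> norm_num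
  · rw [Set.indicator_of_notMem hx]; constructor <;> norm_num

omit hφ in
theorem smul_ind_mem {c : ℝ} (hc : c ∈ Set.Icc (0:ℝ) 1) (M : Set X) :
    ∀ x, (c • M.indicator fun _ => (1:ℝ)) x ∈ Set.Icc (0:ℝ) 1 := by
  intro x
  by_cases hx : x ∈ M
  · simp only [Pi.smul_apply, Set.indicator_of_mem hx, smul_eq_mul, mul_one]
    exact hc
  · simp only [Pi.smul_apply, Set.indicator_of_notMem hx, smul_eq_mul, mul_zero]
    constructor <;> norm_num

omit hφ in
theorem gfun_meas (c : ℕ → ℝ) {M : ℕ → Set X} (hM : ∀ k, MeasurableSet (M k)) (F : Finset ℕ) :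
    Measurable fun x => ∑ k ∈ F, c k * (M k).indicator (fun _ => (1:ℝ)) x :=
  Finset.measurable_sum F fun k _ => (measurable_const.indicator (hM k)).const_mul (c k)

omit hφ in
theorem gfun_mem {c : ℕ → ℝ} {M : ℕ → Set X} (hd : Pairwise (Function.onFun Disjoint M))
    {F : Finset ℕ} (hc : ∀ k ∈ F, c k ∈ Set.Icc (0:ℝ) 1) (x : X) :
    (∑ k ∈ F, c k * (M k).indicator (fun _ => (1:ℝ)) x) ∈ Set.Icc (0:ℝ) 1 := by
  constructor
  · apply Finset.sum_nonneg
    intro k hk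
    exact mul_nonneg (hc k hk).1 (Set.indicator_nonneg (fun _ _ => zero_le_one) x)
  · by_cases h : ∃ k ∈ F, x ∈ M k
    · obtain ⟨k₀, hk₀F, hk₀⟩ := h
      rw [Finset.sum_eq_single_of_mem k₀ hk₀F ?_]
      · rw [Set.indicator_of_mem hk₀, mul_one]
        exact (hc k₀ hk₀F).2
      · intro k hk hne
        have hx : x ∉ M k := fun hxk => Set.disjoint_left.mp (hd hne) hxk hk₀
        rw [Set.indicator_of_notMem hx, mul_zero]
    · push_neg at h
      rw [Finset.sum_eq_zero fun k hk => by rw [Set.indicator_of_notMem (h k hk), mul_zero]]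
      exact zero_le_one

end POVMAux

namespace POVMAux

variable {X : Type u} [MeasurableSpace X]

/-- The zero element of the parameter space. -/
def zeroP : {p : X → ℝ // Measurable p ∧ ∀ x, p x ∈ Set.Icc (0 : ℝ) 1} :=
  ⟨fun _ => (0:ℝ), measurable_const, fun _ => by constructor <;> norm_num⟩

/-- The scaled indicator as an element of the parameter space. -/
def smulIndP {c : ℝ} (hc : c ∈ Set.Icc (0:ℝ) 1) {M : Set X} (hM : MeasurableSet M) :
    {p : X → ℝ // Measurable p ∧ ∀ x, p x ∈ Set.Icc (0 : ℝ) 1} :=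
  ⟨c • M.indicator fun _ => (1:ℝ), (measurable_const.indicator hM).const_mul c,
    smul_ind_mem hc M⟩

/-- A simple combination of indicators as an element of the parameter space. -/
def gP (c : ℕ → ℝ) {M : ℕ → Set X} (hM : ∀ k, MeasurableSet (M k))
    (hd : Pairwise (Function.onFun Disjoint M)) (F : Finset ℕ)
    (hc : ∀ k ∈ F, c k ∈ Set.Icc (0:ℝ) 1) :
    {p : X → ℝ // Measurable p ∧ ∀ x, p x ∈ Set.Icc (0 : ℝ) 1} :=
  ⟨fun x => ∑ k ∈ F, c k * (M k).indicator (fun _ => (1:ℝ)) x,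
    gfun_meas c hM F, gfun_mem hd hc⟩

/-- The dyadic approximation as an element of the parameter space. -/
def sApproxP (p : {p : X → ℝ // Measurable p ∧ ∀ x, p x ∈ Set.Icc (0 : ℝ) 1}) (n : ℕ) :
    {p : X → ℝ // Measurable p ∧ ∀ x, p x ∈ Set.Icc (0 : ℝ) 1} :=
  ⟨sApprox p.1 n, sApprox_measurable p.2.1 n, fun x => sApprox_mem (p.2.2 x) n⟩

end POVMAux

namespace POVMAux

open MeasureTheory

variable {X : Type u} [MeasurableSpace X] {H : Type v}
  [NormedAddCommGroup H] [InnerProductSpace ℂ H]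
variable (φ : ∀ M : Set X, MeasurableSet M → (H →L[ℂ] H)) (hφ : IsPOVM φ)
variable (Φ' : {p : X → ℝ // Measurable p ∧ ∀ x, p x ∈ Set.Icc (0 : ℝ) 1} →
    {A : H →L[ℂ] H // IsEffect A})
variable
  (h1 : ∀ (M : Set X) (hM : MeasurableSet M)
      (hp : Measurable (M.indicator fun _ => (1 : ℝ)) ∧
        ∀ x, (M.indicator fun _ => (1 : ℝ)) x ∈ Set.Icc (0 : ℝ) 1),
    (Φ' ⟨M.indicator fun _ => (1 : ℝ), hp⟩).1 = φ M hM)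
  (h2 : ∀ (p q : {p : X → ℝ // Measurable p ∧ ∀ x, p x ∈ Set.Icc (0 : ℝ) 1})
      (hle : ∀ x, p.1 x + q.1 x ≤ 1)
      (hpq : Measurable (p.1 + q.1) ∧ ∀ x, (p.1 + q.1) x ∈ Set.Icc (0 : ℝ) 1),
    (Φ' ⟨p.1 + q.1, hpq⟩).1 = (Φ' p).1 + (Φ' q).1)
  (h3 : ∀ (r : ℝ) (hr : r ∈ Set.Icc (0 : ℝ) 1)
      (p : {p : X → ℝ // Measurable p ∧ ∀ x, p x ∈ Set.Icc (0 : ℝ) 1})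
      (hrp : Measurable (r • p.1) ∧ ∀ x, (r • p.1) x ∈ Set.Icc (0 : ℝ) 1),
    (Φ' ⟨r • p.1, hrp⟩).1 = (r : ℂ) • (Φ' p).1)
  (h4 : ∀ (p : ℕ → {p : X → ℝ // Measurable p ∧ ∀ x, p x ∈ Set.Icc (0 : ℝ) 1})
      (p' : {p : X → ℝ // Measurable p ∧ ∀ x, p x ∈ Set.Icc (0 : ℝ) 1}),
    (∀ x, Monotone fun n => (p n).1 x) →
    (∀ x, Tendsto (fun n => (p n).1 x) atTop (𝓝 (p'.1 x))) →
    WOTTendsto (fun n => (Φ' (p n)).1) (Φ' p').1)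

include h3 in
theorem uniq_zero : (Φ' (zeroP : {p : X → ℝ // _})).1 = 0 := by
  have hrp : Measurable ((0:ℝ) • (zeroP : {p : X → ℝ // _}).1) ∧
      ∀ x, ((0:ℝ) • (zeroP : {p : X → ℝ // _}).1) x ∈ Set.Icc (0 : ℝ) 1 :=
    ⟨(zeroP : {p : X → ℝ // _}).2.1.const_smul (0:ℝ), fun x => by
      simp [zeroP, Set.mem_Icc]⟩
  have h := h3 0 (by constructor <;> norm_num) zeroP hrp
  have he : (⟨(0:ℝ) • (zeroP : {p : X → ℝ // _}).1, hrp⟩ :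
      {p : X → ℝ // Measurable p ∧ ∀ x, p x ∈ Set.Icc (0 : ℝ) 1}) = zeroP :=
    Subtype.ext (funext fun x => by simp [zeroP])
  rw [he] at h
  rw [h]
  simp

include h1 h3 in
theorem uniq_smul_ind {c : ℝ} (hc : c ∈ Set.Icc (0:ℝ) 1) {M : Set X} (hM : MeasurableSet M) :
    (Φ' (smulIndP hc hM)).1 = (c : ℂ) • φ M hM := by
  have hrp : Measurable (c • (⟨M.indicator fun _ => (1:ℝ), ind_meas hM, ind_mem M⟩ :
        {p : X → ℝ // Measurable p ∧ ∀ x, p x ∈ Set.Icc (0 : ℝ) 1}).1) ∧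
      ∀ x, (c • (⟨M.indicator fun _ => (1:ℝ), ind_meas hM, ind_mem M⟩ :
        {p : X → ℝ // Measurable p ∧ ∀ x, p x ∈ Set.Icc (0 : ℝ) 1}).1) x ∈ Set.Icc (0 : ℝ) 1 :=
    ⟨(measurable_const.indicator hM).const_mul c, smul_ind_mem hc M⟩
  have h := h3 c hc ⟨M.indicator fun _ => (1:ℝ), ind_meas hM, ind_mem M⟩ hrp
  rw [h1 M hM ⟨ind_meas hM, ind_mem M⟩] at h
  exact h

include h1 h2 h3 in
theorem uniq_scop (c : ℕ → ℝ) {M : ℕ → Set X} (hM : ∀ k, MeasurableSet (M k))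
    (hd : Pairwise (Function.onFun Disjoint M)) (F : Finset ℕ)
    (hc : ∀ k ∈ F, c k ∈ Set.Icc (0:ℝ) 1)
    (P : {p : X → ℝ // Measurable p ∧ ∀ x, p x ∈ Set.Icc (0 : ℝ) 1})
    (hP : P.1 = fun x => ∑ k ∈ F, c k * (M k).indicator (fun _ => (1:ℝ)) x) :
    (Φ' P).1 = scop φ c M hM F := by
  classical
  induction F using Finset.induction_on generalizing P with
  | empty =>
    have he : P = zeroP := Subtype.ext (hP.trans (funext fun x => by simp [zeroP]))
    rw [he, uniq_zero Φ' h3]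
    simp [scop]
  | @insert a F ha IH =>
    have hca : c a ∈ Set.Icc (0:ℝ) 1 := hc a (Finset.mem_insert_self a F)
    have hcF : ∀ k ∈ F, c k ∈ Set.Icc (0:ℝ) 1 := fun k hk => hc k (Finset.mem_insert_of_mem hk)
    set pa := smulIndP hca (hM a) with hpa
    set pg := gP c hM hd F hcF with hpg
    have hle : ∀ x, pa.1 x + pg.1 x ≤ 1 := by
      intro x
      by_cases hx : x ∈ M a
      · have hzero : pg.1 x = 0 := by
          apply Finset.sum_eq_zero
          intro k hk
          have hka : k ≠ a := fun he' => ha (he' ▸ hk)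
          have hxk : x ∉ M k := fun hxk => Set.disjoint_left.mp (hd hka) hxk hx
          rw [Set.indicator_of_notMem hxk, mul_zero]
        have hpa1 : pa.1 x = c a := by
          simp [hpa, smulIndP, Set.indicator_of_mem hx]
        rw [hpa1, hzero, add_zero]
        exact hca.2
      · have hpa1 : pa.1 x = 0 := by
          simp [hpa, smulIndP, Set.indicator_of_notMem hx]
        rw [hpa1, zero_add]
        exact (pg.2.2 x).2
    have hsum : Measurable (pa.1 + pg.1) ∧ ∀ x, (pa.1 + pg.1) x ∈ Set.Icc (0 : ℝ) 1 :=
      ⟨pa.2.1.add pg.2.1, fun x => ⟨add_nonneg (pa.2.2 x).1 (pg.2.2 x).1, hle x⟩⟩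
    have h := h2 pa pg hle hsum
    have hPe : P = ⟨pa.1 + pg.1, hsum⟩ := by
      apply Subtype.ext
      rw [hP]
      funext x
      show ∑ k ∈ insert a F, c k * (M k).indicator (fun _ => (1:ℝ)) x = pa.1 x + pg.1 x
      rw [Finset.sum_insert ha]
      have hpa1 : pa.1 x = c a * (M a).indicator (fun _ => (1:ℝ)) x := by
        simp [hpa, smulIndP]
      rw [hpa1]
      rfl
    rw [hPe, h, uniq_smul_ind φ Φ' h1 h3 hca (hM a), IH hcF pg rfl]
    simp [scop, Finset.sum_insert ha]

include h1 h2 h3 in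
theorem uniq_sapprox (p : {p : X → ℝ // Measurable p ∧ ∀ x, p x ∈ Set.Icc (0 : ℝ) 1}) (n : ℕ) :
    (Φ' (sApproxP p n)).1 = Tn φ p.1 p.2.1 n := by
  have hc : ∀ k ∈ Finset.range (2 ^ n + 1), ((k : ℝ) / 2 ^ n) ∈ Set.Icc (0:ℝ) 1 := by
    intro k hk
    have h2n : (0:ℝ) < 2 ^ n := by positivity
    constructor
    · positivity
    · rw [div_le_one h2n]
      rw [Finset.mem_range] at hk
      exact_mod_cast Nat.lt_succ_iff.mp hk
  exact uniq_scop φ Φ' h1 h2 h3 (fun k => (k : ℝ) / 2 ^ n) (fun k => lev_meas p.2.1 n k)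
    (lev_disjoint p.1 n) (Finset.range (2 ^ n + 1)) hc (sApproxP p n)
    (funext fun x => (lev_sum p.2.2 n x).symm)

include hφ h1 h2 h3 h4 in
theorem uniq_key (p : {p : X → ℝ // Measurable p ∧ ∀ x, p x ∈ Set.Icc (0 : ℝ) 1}) (ψ : H) :
    ⟪(Φ' p).1 ψ, ψ⟫ = ((Qf φ hφ p.1 ψ : ℝ) : ℂ) := by
  have hw := h4 (fun n => sApproxP p n) p (fun x => sApprox_monotone (p.2.2 x))
    (fun x => sApprox_tendsto (p.2.2 x)) ψ ψ
  have he : ∀ n, (Φ' (sApproxP p n)).1 = Tn φ p.1 p.2.1 n :=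
    fun n => uniq_sapprox φ Φ' h1 h2 h3 p n
  simp only [he] at hw
  exact tendsto_nhds_unique hw (Tn_self_tendsto φ hφ p.1 p.2.1 p.2.2 ψ)

end POVMAux

theorem stmt5 {X : Type u} [MeasurableSpace X] {H : Type v}
    [NormedAddCommGroup H] [InnerProductSpace ℂ H] [CompleteSpace H]
    (φ : ∀ M : Set X, MeasurableSet M → (H →L[ℂ] H)) (hφ : IsPOVM φ) :
    ∃! Φ : {p : X → ℝ // Measurable p ∧ ∀ x, p x ∈ Set.Icc (0 : ℝ) 1} →
        {A : H →L[ℂ] H // IsEffect A},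
      (∀ (M : Set X) (hM : MeasurableSet M)
          (hp : Measurable (M.indicator fun _ => (1 : ℝ)) ∧
            ∀ x, (M.indicator fun _ => (1 : ℝ)) x ∈ Set.Icc (0 : ℝ) 1),
        (Φ ⟨M.indicator fun _ => (1 : ℝ), hp⟩).1 = φ M hM) ∧
      (∀ (p q : {p : X → ℝ // Measurable p ∧ ∀ x, p x ∈ Set.Icc (0 : ℝ) 1})
          (hle : ∀ x, p.1 x + q.1 x ≤ 1)
          (hpq : Measurable (p.1 + q.1) ∧ ∀ x, (p.1 + q.1) x ∈ Set.Icc (0 : ℝ) 1),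
        (Φ ⟨p.1 + q.1, hpq⟩).1 = (Φ p).1 + (Φ q).1) ∧
      (∀ (r : ℝ) (hr : r ∈ Set.Icc (0 : ℝ) 1)
          (p : {p : X → ℝ // Measurable p ∧ ∀ x, p x ∈ Set.Icc (0 : ℝ) 1})
          (hrp : Measurable (r • p.1) ∧ ∀ x, (r • p.1) x ∈ Set.Icc (0 : ℝ) 1),
        (Φ ⟨r • p.1, hrp⟩).1 = (r : ℂ) • (Φ p).1) ∧
      (∀ (p : ℕ → {p : X → ℝ // Measurable p ∧ ∀ x, p x ∈ Set.Icc (0 : ℝ) 1})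
          (p' : {p : X → ℝ // Measurable p ∧ ∀ x, p x ∈ Set.Icc (0 : ℝ) 1}),
        (∀ x, Monotone fun n => (p n).1 x) →
        (∀ x, Tendsto (fun n => (p n).1 x) atTop (𝓝 (p'.1 x))) →
        WOTTendsto (fun n => (Φ (p n)).1) (Φ p').1) := by
  classical
  refine ⟨fun p => ⟨POVMAux.Aop φ hφ p.1 p.2.1 p.2.2, POVMAux.Aop_isEffect φ hφ p.1 p.2.1 p.2.2⟩,
    ⟨?_, ?_, ?_, ?_⟩, ?_⟩
  · -- indicator property
    intro M hM hp
    apply POVMAux.clm_ext_inner_self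
    intro ψ
    show ⟪POVMAux.Aop φ hφ _ _ _ ψ, ψ⟫ = _
    rw [POVMAux.Aop_inner_self φ hφ _ hp.1 hp.2 ψ, POVMAux.Qf_indicator φ hφ M hM ψ]
    exact (POVMAux.form_eq_re φ hφ M hM ψ).symm
  · -- additivity
    intro p q hle hpq
    apply POVMAux.clm_ext_inner_self
    intro ψ
    show ⟪POVMAux.Aop φ hφ _ _ _ ψ, ψ⟫ = ⟪(POVMAux.Aop φ hφ _ _ _ + POVMAux.Aop φ hφ _ _ _) ψ, ψ⟫
    rw [ContinuousLinearMap.add_apply, inner_add_left,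
      POVMAux.Aop_inner_self φ hφ _ hpq.1 hpq.2 ψ,
      POVMAux.Aop_inner_self φ hφ _ p.2.1 p.2.2 ψ,
      POVMAux.Aop_inner_self φ hφ _ q.2.1 q.2.2 ψ,
      POVMAux.Qf_add φ hφ p.1 q.1 (POVMAux.integrable_Icc φ hφ p.1 p.2.1 p.2.2 ψ)
        (POVMAux.integrable_Icc φ hφ q.1 q.2.1 q.2.2 ψ)]
    push_cast
    ring
  · -- homogeneity
    intro r hr p hrp
    apply POVMAux.clm_ext_inner_self
    intro ψ
    show ⟪POVMAux.Aop φ hφ _ _ _ ψ, ψ⟫ = ⟪((r : ℂ) • POVMAux.Aop φ hφ _ _ _) ψ, ψ⟫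
    rw [ContinuousLinearMap.smul_apply, inner_smul_left, Complex.conj_ofReal,
      POVMAux.Aop_inner_self φ hφ _ hrp.1 hrp.2 ψ,
      POVMAux.Aop_inner_self φ hφ _ p.2.1 p.2.2 ψ,
      POVMAux.Qf_smul φ hφ r p.1 ψ]
    push_cast
    ring
  · -- monotone convergence
    intro p p' hmono htend
    apply POVMAux.wot_of_inner_self
    intro w
    show Tendsto (fun n => ⟪POVMAux.Aop φ hφ (p n).1 (p n).2.1 (p n).2.2 w, w⟫) atTop
      (𝓝 ⟪POVMAux.Aop φ hφ p'.1 p'.2.1 p'.2.2 w, w⟫)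
    have hr : (fun n => ⟪POVMAux.Aop φ hφ (p n).1 (p n).2.1 (p n).2.2 w, w⟫)
        = fun n => ((POVMAux.Qf φ hφ (p n).1 w : ℝ) : ℂ) :=
      funext fun n => POVMAux.Aop_inner_self φ hφ (p n).1 (p n).2.1 (p n).2.2 w
    rw [hr, POVMAux.Aop_inner_self φ hφ p'.1 p'.2.1 p'.2.2 w]
    have h1 : Tendsto (fun n => POVMAux.Qf φ hφ (p n).1 w) atTop
        (𝓝 (POVMAux.Qf φ hφ p'.1 w)) := by
      apply MeasureTheory.integral_tendsto_of_tendsto_of_monotone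
      · exact fun n => POVMAux.integrable_Icc φ hφ (p n).1 (p n).2.1 (p n).2.2 w
      · exact POVMAux.integrable_Icc φ hφ p'.1 p'.2.1 p'.2.2 w
      · exact MeasureTheory.ae_of_all _ hmono
      · exact MeasureTheory.ae_of_all _ htend
    exact (Complex.continuous_ofReal.tendsto _).comp h1
  · -- uniqueness
    intro Φ' hΦ'
    obtain ⟨h1, h2, h3, h4⟩ := hΦ'
    funext pp
    apply Subtype.ext
    apply POVMAux.clm_ext_inner_self
    intro ψ
    rw [POVMAux.uniq_key φ hφ Φ' h1 h2 h3 h4 pp ψ]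
    exact (POVMAux.Aop_inner_self φ hφ pp.1 pp.2.1 pp.2.2 ψ).symm

end
end

section
/- Let X be a measurable space, H a complex Hilbert space, and φ a POVM on X with values in effects on H such that every value is a projection: φ(M)∘φ(M) = φ(M) for all measurable M. Then φ is multiplicative on intersections: φ(M ∩ N) = φ(M) ∘ φ(N) for all measurable subsets M, N of X. -/
open scoped ComplexInnerProductSpace ComplexOrder

universe u v

noncomputable section

/-- Two projections whose sum is a projection are mutually annihilating. -/
lemma orth_of_proj {H : Type v} [NormedAddCommGroup H] [InnerProductSpace ℂ H]
    (P Q : H →L[ℂ] H) (hP : P * P = P) (hQ : Q * Q = Q)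
    (hPQ : (P + Q) * (P + Q) = P + Q) : P * Q = 0 := by
  have expand : (P + Q) * (P + Q) = P * P + (P * Q + (Q * P + Q * Q)) := by noncomm_ring
  rw [expand, hP, hQ] at hPQ
  have h1 : P * Q + Q * P = 0 := by
    have h := add_left_cancel hPQ
    rw [← add_assoc] at h
    exact add_right_cancel (h.trans (zero_add Q).symm)
  have h2 : P * Q + P * (Q * P) = 0 := by
    have := congrArg (fun x => P * x) h1
    simpa [mul_add, ← mul_assoc, hP] using this
  have h3 : P * (Q * P) + Q * P = 0 := by
    have := congrArg (fun x => x * P) h1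
    simpa [add_mul, mul_assoc, hP] using this
  have hcomm : P * Q = Q * P := by
    have := congrArg (fun x => x - (P * (Q * P))) (h2.trans h3.symm)
    simpa using this
  have h4 : (2 : ℂ) • (P * Q) = 0 := by
    rw [two_smul]; nth_rewrite 2 [hcomm]; exact h1
  have := smul_eq_zero.mp h4
  simpa using this

theorem stmt9 {X : Type u} [MeasurableSpace X] {H : Type v}
    [NormedAddCommGroup H] [InnerProductSpace ℂ H] [CompleteSpace H]
    (φ : ∀ M : Set X, MeasurableSet M → (H →L[ℂ] H)) (hφ : IsPOVM φ)
    (hproj : ∀ (M : Set X) (hM : MeasurableSet M), (φ M hM) ∘L (φ M hM) = φ M hM) :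
    ∀ (M N : Set X) (hM : MeasurableSet M) (hN : MeasurableSet N),
      φ (M ∩ N) (hM.inter hN) = (φ M hM) ∘L (φ N hN) := by
  obtain ⟨heff, huniv, hadd⟩ := hφ
  have hcong : ∀ (M N : Set X) (hM : MeasurableSet M) (hN : MeasurableSet N), M = N →
      φ M hM = φ N hN := by rintro M N hM hN rfl; rfl
  -- the empty set maps to 0
  have hempty : φ ∅ MeasurableSet.empty = 0 := by
    have h0 : ((φ ∅ MeasurableSet.empty : H →L[ℂ] H) : H →ₗ[ℂ] H) = 0 := by
      rw [← inner_map_self_eq_zero]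
      intro ψ
      show ⟪φ ∅ MeasurableSet.empty ψ, ψ⟫ = 0
      have h := hadd (fun _ => ∅) (fun _ => MeasurableSet.empty)
        (fun i j hij => by simp [Function.onFun]) ψ
      rw [hcong _ ∅ _ MeasurableSet.empty (by simp)] at h
      by_contra hx
      have hns : ¬ Summable (fun _ : ℕ => ⟪φ ∅ MeasurableSet.empty ψ, ψ⟫) := by
        rw [summable_const_iff]; exact hx
      rw [tsum_eq_zero_of_not_summable hns] at h
      exact hx h
    apply ContinuousLinearMap.coe_injective
    rw [h0, ContinuousLinearMap.coe_zero]
  -- finite additivity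
  have hadd2 : ∀ (M N : Set X) (hM : MeasurableSet M) (hN : MeasurableSet N),
      Disjoint M N → φ (M ∪ N) (hM.union hN) = φ M hM + φ N hN := by
    intro M N hM hN hdis
    have key : ∀ ψ : H,
        ⟪(φ (M ∪ N) (hM.union hN) - (φ M hM + φ N hN)) ψ, ψ⟫ = 0 := by
      intro ψ
      set f : ℕ → Set X := fun n => match n with | 0 => M | 1 => N | _ => ∅ with hf_def
      have hf : ∀ n, MeasurableSet (f n) := by
        intro n
        match n with
        | 0 => exact hM
        | 1 => exact hN
        | n + 2 => exact MeasurableSet.empty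
      have hdisj : Pairwise (Function.onFun Disjoint f) := by
        intro i j hij
        unfold Function.onFun
        match i, j with
        | 0, 0 => exact absurd rfl hij
        | 1, 1 => exact absurd rfl hij
        | 0, 1 => exact hdis
        | 1, 0 => exact hdis.symm
        | 0, n + 2 => exact Set.disjoint_empty _
        | 1, n + 2 => exact Set.disjoint_empty _
        | n + 2, m => exact Set.empty_disjoint _
      have h := hadd f hf hdisj ψ
      have hU : (⋃ n, f n) = M ∪ N := by
        apply Set.eq_of_subset_of_subset
        · refine Set.iUnion_subset fun n => ?_
          match n with
          | 0 => exact Set.subset_union_left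
          | 1 => exact Set.subset_union_right
          | n + 2 => exact Set.empty_subset _
        · exact Set.union_subset (Set.subset_iUnion f 0) (Set.subset_iUnion f 1)
      rw [hcong _ _ _ (hM.union hN) hU] at h
      have ht : (∑' n, ⟪φ (f n) (hf n) ψ, ψ⟫)
          = ⟪φ M hM ψ, ψ⟫ + ⟪φ N hN ψ, ψ⟫ := by
        rw [tsum_eq_sum (s := ({0, 1} : Finset ℕ)) ?_]
        · rw [Finset.sum_insert (by simp), Finset.sum_singleton]; rfl
        · intro n hn
          match n with
          | 0 => simp at hn
          | 1 => simp at hn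
          | n + 2 =>
            show ⟪φ ∅ (hf (n + 2)) ψ, ψ⟫ = 0
            rw [show φ ∅ (hf (n + 2)) = 0 from hempty]
            simp
      rw [ht] at h
      simp only [ContinuousLinearMap.sub_apply, ContinuousLinearMap.add_apply,
        inner_sub_left, inner_add_left, h]
      ring
    have h0 : ((φ (M ∪ N) (hM.union hN) - (φ M hM + φ N hN) : H →L[ℂ] H) : H →ₗ[ℂ] H) = 0 := by
      rw [← inner_map_self_eq_zero]; exact key
    have h0' : φ (M ∪ N) (hM.union hN) - (φ M hM + φ N hN) = 0 :=
      ContinuousLinearMap.coe_injective (by rw [h0, ContinuousLinearMap.coe_zero])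
    exact sub_eq_zero.mp h0'
  intro M N hM hN
  set A := φ (M ∩ N) (hM.inter hN) with hA
  set B := φ (M \ N) (hM.diff hN) with hB
  set C := φ (N \ M) (hN.diff hM) with hC
  have hdisAB : Disjoint (M ∩ N) (M \ N) := by
    rw [Set.disjoint_left]; rintro x ⟨-, hxN⟩ ⟨-, hxN'⟩; exact hxN' hxN
  have hdisAC : Disjoint (M ∩ N) (N \ M) := by
    rw [Set.disjoint_left]; rintro x ⟨hxM, -⟩ ⟨-, hxM'⟩; exact hxM' hxM
  have hdisBC : Disjoint (M \ N) (N \ M) := by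
    rw [Set.disjoint_left]; rintro x ⟨hxM, -⟩ ⟨-, hxM'⟩; exact hxM' hxM
  have hMeq : φ M hM = A + B := by
    rw [← hadd2 (M ∩ N) (M \ N) (hM.inter hN) (hM.diff hN) hdisAB]
    exact hcong _ _ _ _ (Set.inter_union_diff M N).symm
  have hNeq : φ N hN = A + C := by
    rw [← hadd2 (M ∩ N) (N \ M) (hM.inter hN) (hN.diff hM) hdisAC]
    apply hcong
    rw [Set.inter_comm]
    exact (Set.inter_union_diff N M).symm
  have hAA : A * A = A := hproj _ _
  have hBB : B * B = B := hproj _ _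
  have hCC : C * C = C := hproj _ _
  have hABp : (A + B) * (A + B) = A + B := by rw [← hMeq]; exact hproj _ _
  have hACp : (A + C) * (A + C) = A + C := by rw [← hNeq]; exact hproj _ _
  have hBCp : (B + C) * (B + C) = B + C := by
    have := hadd2 (M \ N) (N \ M) (hM.diff hN) (hN.diff hM) hdisBC
    rw [← this]; exact hproj _ _
  have hAC : A * C = 0 := orth_of_proj A C hAA hCC hACp
  have hBA : B * A = 0 := orth_of_proj B A hBB hAA (by rwa [add_comm])
  have hBC : B * C = 0 := orth_of_proj B C hBB hCC hBCp
  show A = (φ M hM) * (φ N hN)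
  rw [hMeq, hNeq, add_mul, mul_add, mul_add, hAA, hAC, hBA, hBC]
  simp

end
end

section
/- Let (X, μ) be a finite measure space, H a complex Hilbert space, and A a POVM on X with values in effects on H that admits a Radon–Nikodym derivative with respect to μ: a strongly measurable function d : X → B(H) with each d(x) positive and ∫_M d dμ = A(M) (Bochner integral) for every measurable M. Let (Y x) be a family of measurable spaces indexed by x ∈ X with a POVM B_x on Y x with values in effects on H for each x, and endow the sigma type Σ x, Y x with its canonical σ-algebra. Assume that for every measurable subset S of Σ x, Y x the function x ↦ √(d x) ∘ B_x(S_x) ∘ √(d x) is Bochner integrable with respect to μ, where S_x = {y | ⟨x, y⟩ ∈ S} and √(d x) is the positive square root of d x. Then the map (A;B) defined on measurable S ⊆ Σ x, Y x by (A;B)(S) = ∫ (√(d x) ∘ B_x(S_x) ∘ √(d x)) dμ(x) is a POVM on Σ x, Y x with values in effects on H: each value is an effect, (A;B)(univ) = id, and (A;B) is countably additive in the weak operator topology on pairwise disjoint measurable sets. -/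
open MeasureTheory Filter Topology
open scoped ComplexInnerProductSpace ComplexOrder

universe u v w

noncomputable section

/-- The inclusion `Y x → Σ x, Y x` is measurable for the canonical σ-algebra on the
sigma type. -/
lemma measurable_sigmaMk {X : Type u} {Y : X → Type v} [∀ x, MeasurableSpace (Y x)]
    (x : X) : Measurable (@Sigma.mk X Y x) :=
  Measurable.of_le_map (iInf_le _ x)

/-- Slices of measurable subsets of a sigma type are measurable. -/
lemma measurableSet_slice {X : Type u} {Y : X → Type v} [∀ x, MeasurableSpace (Y x)]
    {S : Set (Σ x, Y x)} (hS : MeasurableSet S) (x : X) :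
    MeasurableSet (Sigma.mk x ⁻¹' S) :=
  measurable_sigmaMk x hS

section AuxHelpers

variable {H : Type*} [NormedAddCommGroup H] [InnerProductSpace ℂ H]

/-- A positive operator on a complex inner product space is symmetric. -/
lemma IsPositiveOp.symmAux {A : H →L[ℂ] H} (hA : IsPositiveOp A) (u v : H) :
    ⟪A u, v⟫ = ⟪u, A v⟫ := by
  have : (A : H →ₗ[ℂ] H).IsSymmetric := by
    rw [LinearMap.isSymmetric_iff_inner_map_self_real]
    intro w
    have h := hA w
    rw [Complex.nonneg_iff] at h
    exact Complex.conj_eq_iff_im.mpr h.2.symm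
  exact this u v

lemma ofReal_re_of_nonneg {z : ℂ} (h : 0 ≤ z) : ((z.re : ℝ) : ℂ) = z := by
  rcases Complex.nonneg_iff.mp h with ⟨_, him⟩
  exact Complex.ext (by simp) (by simpa using him)

lemma inner_integral_apply {X : Type*} [MeasurableSpace X] {μ : Measure X}
    [CompleteSpace H] {g : X → H →L[ℂ] H} (hg : Integrable g μ) (ψ : H) :
    ⟪(∫ x, g x ∂μ) ψ, ψ⟫ = ∫ x, ⟪g x ψ, ψ⟫ ∂μ := by
  let L : (H →L[ℂ] H) →L[ℝ] ℂ :=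
    (Complex.conjCLE : ℂ ≃L[ℝ] ℂ).toContinuousLinearMap.comp
      (((innerSL ℂ ψ).restrictScalars ℝ).comp
        ((ContinuousLinearMap.apply ℂ H ψ).restrictScalars ℝ))
  have hL : ∀ T : H →L[ℂ] H, L T = ⟪T ψ, ψ⟫ := by
    intro T
    simp only [L, ContinuousLinearMap.comp_apply, ContinuousLinearMap.coe_restrictScalars',
      ContinuousLinearEquiv.coe_coe, Complex.conjCLE_apply, ContinuousLinearMap.apply_apply,
      innerSL_apply_apply]
    exact inner_conj_symm _ _
  calc ⟪(∫ x, g x ∂μ) ψ, ψ⟫ = L (∫ x, g x ∂μ) := (hL _).symm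
    _ = ∫ x, L (g x) ∂μ := (L.integral_comp_comm hg).symm
    _ = ∫ x, ⟪g x ψ, ψ⟫ ∂μ := by simp only [hL]

lemma inner_integrable {X : Type*} [MeasurableSpace X] {μ : Measure X}
    {g : X → H →L[ℂ] H} (hg : Integrable g μ) (ψ : H) :
    Integrable (fun x => ⟪g x ψ, ψ⟫) μ := by
  let L : (H →L[ℂ] H) →L[ℝ] ℂ :=
    (Complex.conjCLE : ℂ ≃L[ℝ] ℂ).toContinuousLinearMap.comp
      (((innerSL ℂ ψ).restrictScalars ℝ).comp
        ((ContinuousLinearMap.apply ℂ H ψ).restrictScalars ℝ))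
  have hL : ∀ T : H →L[ℂ] H, L T = ⟪T ψ, ψ⟫ := by
    intro T
    simp only [L, ContinuousLinearMap.comp_apply, ContinuousLinearMap.coe_restrictScalars',
      ContinuousLinearEquiv.coe_coe, Complex.conjCLE_apply, ContinuousLinearMap.apply_apply,
      innerSL_apply_apply]
    exact inner_conj_symm _ _
  simpa only [hL] using L.integrable_comp hg

variable {Z : Type*} [MeasurableSpace Z]

lemma povm_congr (φ : ∀ M : Set Z, MeasurableSet M → (H →L[ℂ] H)) {N N' : Set Z}
    (h : MeasurableSet N) (h' : MeasurableSet N') (e : N = N') : φ N h = φ N' h' := by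
  subst e; rfl

lemma inner_one_sub_apply (T : H →L[ℂ] H) (ψ : H) :
    ⟪(1 - T) ψ, ψ⟫ = ⟪ψ, ψ⟫ - ⟪T ψ, ψ⟫ := by
  simp [ContinuousLinearMap.sub_apply, inner_sub_left]

lemma IsPOVM.inner_empty {φ : ∀ M : Set Z, MeasurableSet M → (H →L[ℂ] H)}
    (hφ : IsPOVM φ) (ψ : H) : ⟪φ ∅ MeasurableSet.empty ψ, ψ⟫ = 0 := by
  have h := hφ.2.2 (fun _ => (∅ : Set Z)) (fun _ => MeasurableSet.empty)
    (fun i j _ => by simp [Function.onFun]) ψ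
  rw [povm_congr φ (MeasurableSet.iUnion fun _ => MeasurableSet.empty) MeasurableSet.empty
    (Set.iUnion_empty)] at h
  by_cases hs : Summable (fun _ : ℕ => ⟪φ ∅ MeasurableSet.empty ψ, ψ⟫)
  · exact tendsto_nhds_unique tendsto_const_nhds hs.tendsto_atTop_zero
  · rw [tsum_eq_zero_of_not_summable hs] at h; exact h

lemma IsPOVM.sum_le {φ : ∀ M : Set Z, MeasurableSet M → (H →L[ℂ] H)}
    (hφ : IsPOVM φ) (N : ℕ → Set Z) (hN : ∀ n, MeasurableSet (N n))
    (hd : Pairwise (Function.onFun Disjoint N)) (ψ : H) (F : Finset ℕ) :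
    ∑ n ∈ F, (⟪φ (N n) (hN n) ψ, ψ⟫).re ≤ (⟪ψ, ψ⟫ : ℂ).re := by
  classical
  set N' : ℕ → Set Z := fun k => if k ∈ F then N k else ∅ with hN'
  have h' : ∀ k, MeasurableSet (N' k) := fun k => by
    simp only [hN']; split
    · exact hN k
    · exact MeasurableSet.empty
  have hd' : Pairwise (Function.onFun Disjoint N') := by
    intro i j hij
    simp only [Function.onFun, hN']
    split <;> split
    · exact hd hij
    all_goals simp
  have eq1 := hφ.2.2 N' h' hd' ψ
  have term_eq : ∀ k, ⟪φ (N' k) (h' k) ψ, ψ⟫ =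
      if k ∈ F then ⟪φ (N k) (hN k) ψ, ψ⟫ else 0 := by
    intro k
    by_cases hk : k ∈ F
    · rw [povm_congr φ (h' k) (hN k) (by simp [hN', hk]), if_pos hk]
    · rw [povm_congr φ (h' k) MeasurableSet.empty (by simp [hN', hk]), if_neg hk]
      exact hφ.inner_empty ψ
  have tsum_eq : (∑' k, ⟪φ (N' k) (h' k) ψ, ψ⟫) = ∑ n ∈ F, ⟪φ (N n) (hN n) ψ, ψ⟫ := by
    simp only [term_eq]
    rw [tsum_eq_sum (s := F) (fun b hb => if_neg hb)]
    exact Finset.sum_congr rfl fun k hk => if_pos hk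
  rw [tsum_eq] at eq1
  have hle : ⟪φ (⋃ n, N' n) (MeasurableSet.iUnion h') ψ, ψ⟫ ≤ (⟪ψ, ψ⟫ : ℂ) := by
    have h2 := (hφ.1 _ (MeasurableSet.iUnion h')).2 ψ
    rw [inner_one_sub_apply] at h2
    exact sub_nonneg.mp h2
  rw [← Complex.re_sum, ← eq1]
  exact (Complex.le_def.mp hle).1

lemma IsPOVM.summable_re {φ : ∀ M : Set Z, MeasurableSet M → (H →L[ℂ] H)}
    (hφ : IsPOVM φ) (N : ℕ → Set Z) (hN : ∀ n, MeasurableSet (N n))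
    (hd : Pairwise (Function.onFun Disjoint N)) (ψ : H) :
    Summable (fun n => (⟪φ (N n) (hN n) ψ, ψ⟫).re) :=
  summable_of_sum_le
    (fun n => (Complex.nonneg_iff.mp ((hφ.1 _ (hN n)).1 ψ)).1)
    (hφ.sum_le N hN hd ψ)

end AuxHelpers

theorem stmt10 {X : Type u} [MeasurableSpace X] (μ : Measure X) [IsFiniteMeasure μ]
    {H : Type w} [NormedAddCommGroup H] [InnerProductSpace ℂ H] [CompleteSpace H]
    (A : ∀ M : Set X, MeasurableSet M → (H →L[ℂ] H)) (hA : IsPOVM A)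
    -- the Radon–Nikodym derivative `d` of `A` with respect to `μ`
    (d : X → (H →L[ℂ] H)) (hd_meas : StronglyMeasurable d)
    (hd_pos : ∀ x, IsPositiveOp (d x))
    (hd_der : ∀ (M : Set X) (hM : MeasurableSet M), ∫ x in M, d x ∂μ = A M hM)
    -- the positive square root `s x` of `d x`
    (s : X → (H →L[ℂ] H)) (hs_pos : ∀ x, IsPositiveOp (s x))
    (hs_sq : ∀ x, s x ∘L s x = d x)
    -- the family of POVMs `B x` on the measurable spaces `Y x`
    (Y : X → Type v) [∀ x, MeasurableSpace (Y x)]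
    (B : ∀ x, ∀ N : Set (Y x), MeasurableSet N → (H →L[ℂ] H))
    (hB : ∀ x, IsPOVM (B x))
    -- integrability of the integrands
    (hint : ∀ (S : Set (Σ x, Y x)) (hS : MeasurableSet S),
      Integrable (fun x =>
        s x ∘L (B x (Sigma.mk x ⁻¹' S) (measurableSet_slice hS x) ∘L s x)) μ) :
    IsPOVM (fun (S : Set (Σ x, Y x)) (hS : MeasurableSet S) =>
      ∫ x, s x ∘L (B x (Sigma.mk x ⁻¹' S) (measurableSet_slice hS x) ∘L s x) ∂μ) := by
  classical
  have hsym : ∀ x (u v : H), ⟪s x u, v⟫ = ⟪u, s x v⟫ := fun x => (hs_pos x).symmAux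
  have hfg : ∀ (S : Set (Σ x, Y x)) (hS : MeasurableSet S) (x : X) (ψ : H),
      ⟪(s x ∘L (B x (Sigma.mk x ⁻¹' S) (measurableSet_slice hS x) ∘L s x)) ψ, ψ⟫ =
      ⟪B x (Sigma.mk x ⁻¹' S) (measurableSet_slice hS x) (s x ψ), s x ψ⟫ := by
    intro S hS x ψ
    simp only [ContinuousLinearMap.comp_apply]
    exact hsym x _ ψ
  have hpos : ∀ (S : Set (Σ x, Y x)) (hS : MeasurableSet S) (x : X) (ψ : H),
      (0 : ℂ) ≤ ⟪(s x ∘L (B x (Sigma.mk x ⁻¹' S) (measurableSet_slice hS x) ∘L s x)) ψ, ψ⟫ := by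
    intro S hS x ψ
    rw [hfg S hS x ψ]
    exact ((hB x).1 _ _).1 (s x ψ)
  -- the integrand for `univ` is `d`
  have huniv : ∀ x, (s x ∘L (B x (Sigma.mk x ⁻¹' (Set.univ : Set (Σ x, Y x)))
      (measurableSet_slice MeasurableSet.univ x) ∘L s x)) = d x := by
    intro x
    rw [povm_congr (B x) (measurableSet_slice MeasurableSet.univ x) MeasurableSet.univ
      (Set.preimage_univ), (hB x).2.1, ContinuousLinearMap.one_def,
      ContinuousLinearMap.id_comp, hs_sq]
  have hd_int : Integrable d μ :=
    (integrable_congr (Filter.Eventually.of_forall huniv)).mp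
      (hint Set.univ MeasurableSet.univ)
  have hintegral_one : (∫ x, d x ∂μ) = 1 := by
    rw [← hA.2.1, ← hd_der Set.univ MeasurableSet.univ, Measure.restrict_univ]
  -- the main identity for inner products of the integrals
  have key : ∀ (S : Set (Σ x, Y x)) (hS : MeasurableSet S) (ψ : H),
      ⟪(∫ x, s x ∘L (B x (Sigma.mk x ⁻¹' S) (measurableSet_slice hS x) ∘L s x) ∂μ) ψ, ψ⟫
      = ((∫ x, (⟪B x (Sigma.mk x ⁻¹' S) (measurableSet_slice hS x) (s x ψ), s x ψ⟫).re ∂μ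
          : ℝ) : ℂ) := by
    intro S hS ψ
    calc ⟪(∫ x, s x ∘L (B x (Sigma.mk x ⁻¹' S) (measurableSet_slice hS x) ∘L s x) ∂μ) ψ, ψ⟫
        = ∫ x, ⟪(s x ∘L (B x (Sigma.mk x ⁻¹' S) (measurableSet_slice hS x) ∘L s x)) ψ, ψ⟫ ∂μ :=
          inner_integral_apply (hint S hS) ψ
      _ = ∫ x, (((⟪B x (Sigma.mk x ⁻¹' S) (measurableSet_slice hS x) (s x ψ), s x ψ⟫).re
            : ℝ) : ℂ) ∂μ := by
          refine integral_congr_ae (Filter.Eventually.of_forall fun x => ?_)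
          beta_reduce
          rw [hfg S hS x ψ, ofReal_re_of_nonneg (((hB x).1 _ _).1 (s x ψ))]
      _ = ((∫ x, (⟪B x (Sigma.mk x ⁻¹' S) (measurableSet_slice hS x) (s x ψ), s x ψ⟫).re ∂μ
            : ℝ) : ℂ) := integral_ofReal
  refine ⟨?_, ?_, ?_⟩
  · -- effect property
    intro S hS
    constructor
    · intro ψ
      rw [key S hS ψ]
      rw [Complex.zero_le_real]
      refine integral_nonneg fun x => ?_
      exact (Complex.nonneg_iff.mp (((hB x).1 _ _).1 (s x ψ))).1
    · intro ψ
      rw [inner_one_sub_apply, sub_nonneg]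
      have hψ : (⟪ψ, ψ⟫ : ℂ) = ((∫ x, (⟪d x ψ, ψ⟫).re ∂μ : ℝ) : ℂ) := by
        have h1 : (⟪ψ, ψ⟫ : ℂ) = ⟪(∫ x, d x ∂μ) ψ, ψ⟫ := by
          rw [hintegral_one]; simp
        rw [h1, inner_integral_apply hd_int ψ]
        calc ∫ x, ⟪d x ψ, ψ⟫ ∂μ = ∫ x, (((⟪d x ψ, ψ⟫).re : ℝ) : ℂ) ∂μ := by
              refine integral_congr_ae (Filter.Eventually.of_forall fun x => ?_)
              beta_reduce
              rw [ofReal_re_of_nonneg (hd_pos x ψ)]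
          _ = ((∫ x, (⟪d x ψ, ψ⟫).re ∂μ : ℝ) : ℂ) := integral_ofReal
      rw [key S hS ψ, hψ, Complex.real_le_real]
      have hd_inner_int : Integrable (fun x => (⟪d x ψ, ψ⟫).re) μ := by
        have := (inner_integrable hd_int ψ).re
        simpa using this
      have hS_inner_int : Integrable
          (fun x => (⟪B x (Sigma.mk x ⁻¹' S) (measurableSet_slice hS x) (s x ψ), s x ψ⟫).re)
          μ := by
        have := (inner_integrable (hint S hS) ψ).re
        refine this.congr (Filter.Eventually.of_forall fun x => ?_)
        simp only [RCLike.re_to_complex]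
        rw [hfg S hS x ψ]
      refine integral_mono hS_inner_int hd_inner_int fun x => ?_
      -- pointwise bound
      have hBd : ⟪B x (Sigma.mk x ⁻¹' S) (measurableSet_slice hS x) (s x ψ), s x ψ⟫
          ≤ (⟪s x ψ, s x ψ⟫ : ℂ) := by
        have h2 := ((hB x).1 _ (measurableSet_slice hS x)).2 (s x ψ)
        rw [inner_one_sub_apply] at h2
        exact sub_nonneg.mp h2
      have hdd : (⟪s x ψ, s x ψ⟫ : ℂ) = ⟪d x ψ, ψ⟫ := by
        rw [← hs_sq x]
        simp only [ContinuousLinearMap.comp_apply]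
        exact (hsym x (s x ψ) ψ).symm
      have := (Complex.le_def.mp hBd).1
      rw [hdd] at this
      exact this
  · -- value at univ
    beta_reduce
    rw [integral_congr_ae (Filter.Eventually.of_forall huniv), hintegral_one]
  · -- countable additivity
    intro M hM hdisj ψ
    have hdisj' : ∀ x, Pairwise (Function.onFun Disjoint fun n => Sigma.mk x ⁻¹' M n) :=
      fun x i j hij => (hdisj hij).preimage _
    set r : ℕ → X → ℝ := fun n x =>
      (⟪B x (Sigma.mk x ⁻¹' M n) (measurableSet_slice (hM n) x) (s x ψ), s x ψ⟫).re with hr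
    set rU : X → ℝ := fun x =>
      (⟪B x (Sigma.mk x ⁻¹' ⋃ n, M n) (measurableSet_slice (MeasurableSet.iUnion hM) x)
        (s x ψ), s x ψ⟫).re with hrU
    have rnonneg : ∀ n x, 0 ≤ r n x := fun n x =>
      (Complex.nonneg_iff.mp (((hB x).1 _ _).1 (s x ψ))).1
    have hsumx : ∀ x, Summable (fun n => r n x) := fun x =>
      (hB x).summable_re _ (fun n => measurableSet_slice (hM n) x) (hdisj' x) (s x ψ)
    have hUx : ∀ x, rU x = ∑' n, r n x := by
      intro x
      have e := (hB x).2.2 (fun n => Sigma.mk x ⁻¹' M n)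
        (fun n => measurableSet_slice (hM n) x) (hdisj' x) (s x ψ)
      rw [povm_congr (B x) _ (measurableSet_slice (MeasurableSet.iUnion hM) x)
        (Set.preimage_iUnion).symm] at e
      have hz : ∀ n, ⟪B x (Sigma.mk x ⁻¹' M n) (measurableSet_slice (hM n) x) (s x ψ), s x ψ⟫
          = ((r n x : ℝ) : ℂ) := fun n =>
        (ofReal_re_of_nonneg (((hB x).1 _ _).1 (s x ψ))).symm
      have : ((rU x : ℝ) : ℂ) = ((∑' n, r n x : ℝ) : ℂ) := by
        rw [Complex.ofReal_tsum,
          ofReal_re_of_nonneg (((hB x).1 _ _).1 (s x ψ)), e]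
        exact tsum_congr hz
      exact_mod_cast this
    have hr_int : ∀ n, Integrable (r n) μ := by
      intro n
      have := (inner_integrable (hint (M n) (hM n)) ψ).re
      refine this.congr (Filter.Eventually.of_forall fun x => ?_)
      simp only [RCLike.re_to_complex]
      rw [hfg (M n) (hM n) x ψ]
    have hrU_int : Integrable rU μ := by
      have := (inner_integrable (hint _ (MeasurableSet.iUnion hM)) ψ).re
      refine this.congr (Filter.Eventually.of_forall fun x => ?_)
      simp only [RCLike.re_to_complex]
      rw [hfg _ (MeasurableSet.iUnion hM) x ψ]
    have hsum_int : Summable (fun n => ∫ x, r n x ∂μ) := by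
      refine summable_of_sum_le (c := ∫ x, rU x ∂μ) (fun n => integral_nonneg (rnonneg n)) fun F => ?_
      rw [← integral_finset_sum F (fun n _ => hr_int n)]
      refine integral_mono (integrable_finset_sum F fun n _ => hr_int n) hrU_int fun x => ?_
      rw [hUx x]
      exact Summable.sum_le_tsum F (fun i _ => rnonneg i x) (hsumx x)
    have hswap : ∫ x, rU x ∂μ = ∑' n, ∫ x, r n x ∂μ := by
      rw [integral_congr_ae (Filter.Eventually.of_forall hUx)]
      refine integral_tsum (fun n => (hr_int n).aestronglyMeasurable) ?_
      have h1 : ∀ n, ∫⁻ x, ‖r n x‖ₑ ∂μ = ENNReal.ofReal (∫ x, r n x ∂μ) := by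
        intro n
        rw [ofReal_integral_eq_lintegral_ofReal (hr_int n)
          (Filter.Eventually.of_forall (rnonneg n))]
        exact lintegral_congr fun x => Real.enorm_eq_ofReal (rnonneg n x)
      simp only [h1]
      rw [← ENNReal.ofReal_tsum_of_nonneg (fun n => integral_nonneg (rnonneg n)) hsum_int]
      exact ENNReal.ofReal_ne_top
    calc ⟪(∫ x, s x ∘L (B x (Sigma.mk x ⁻¹' ⋃ n, M n)
          (measurableSet_slice (MeasurableSet.iUnion hM) x) ∘L s x) ∂μ) ψ, ψ⟫
        = ((∫ x, rU x ∂μ : ℝ) : ℂ) := key _ (MeasurableSet.iUnion hM) ψ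
      _ = ((∑' n, ∫ x, r n x ∂μ : ℝ) : ℂ) := by rw [hswap]
      _ = ∑' n, ((∫ x, r n x ∂μ : ℝ) : ℂ) := Complex.ofReal_tsum _
      _ = ∑' n, ⟪(∫ x, s x ∘L (B x (Sigma.mk x ⁻¹' M n)
          (measurableSet_slice (hM n) x) ∘L s x) ∂μ) ψ, ψ⟫ :=
        (tsum_congr fun n => (key (M n) (hM n) ψ).symm)

end
end
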